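/- For all sufficiently large n, the gradient of f has a unique zero in the region R = {(k,l) ∈ ℝ² : k ≥ 1, l ≥ 1, k + l ≤ n − 1}; this zero has the symmetric form (k*(n), k*(n)), and k*(n) = (ln n − ln ln n + ln ln 2)/ln 2 + O(ln ln n / ln n); that is, there exist constants C and N such that for all n ≥ N, |k*(n) − (ln n − ln ln n + ln ln 2)/ln 2| ≤ C · ln ln n / ln n. -/

import Mathlib

set_option maxRecDepth 8000
open Filter Real Set

noncomputable def f (n : ℕ) (k l : ℝ) : ℝ :=
  (k + l + 1) * Real.log n - k * Real.log k - l * Real.log l + k + l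
    - ((k + l) ^ 2 / 2) * Real.log 2 - ((k + l) / 2) * Real.log 2
    - ((n : ℝ) - k - l) * (Real.exp (-k * Real.log 2) + Real.exp (-l * Real.log 2))

noncomputable def gg (n : ℕ) (k l : ℝ) : ℝ :=
  Real.log n - Real.log k - (k + l) * Real.log 2 - Real.log 2 / 2
    + Real.exp (-k * Real.log 2) + Real.exp (-l * Real.log 2)
    + ((n : ℝ) - k - l) * Real.log 2 * Real.exp (-k * Real.log 2)

lemma f_comm (n : ℕ) (k l : ℝ) : f n k l = f n l k := by unfold f; ring

lemma hasDerivAt_exp_neg_mul (c : ℝ) (k : ℝ) :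
    HasDerivAt (fun x : ℝ => Real.exp (-x * c)) (-c * Real.exp (-k * c)) k := by
  have h : HasDerivAt (fun x : ℝ => -x * c) (-c) k := by
    simpa using ((hasDerivAt_id k).neg.mul_const c)
  simpa [mul_comm] using h.exp

lemma hasDerivAt_f (n : ℕ) (l : ℝ) {k : ℝ} (hk : 0 < k) :
    HasDerivAt (fun k' => f n k' l) (gg n k l) k := by
  have h1 : HasDerivAt (fun k' : ℝ => (k' + l + 1) * Real.log n) (Real.log n) k := by
    simpa using (((hasDerivAt_id k).add_const l).add_const 1).mul_const (Real.log n)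
  have h2 : HasDerivAt (fun k' : ℝ => k' * Real.log k') (Real.log k + 1) k :=
    Real.hasDerivAt_mul_log hk.ne'
  have h3 : HasDerivAt (fun k' : ℝ => ((k' + l) ^ 2 / 2) * Real.log 2)
      ((k + l) * Real.log 2) k := by
    have := (((hasDerivAt_id k).add_const l).pow 2).div_const 2 |>.mul_const (Real.log 2)
    refine this.congr_deriv ?_
    simp only [id_eq]; ring
  have h4 : HasDerivAt (fun k' : ℝ => ((k' + l) / 2) * Real.log 2) (Real.log 2 / 2) k := by
    have := (((hasDerivAt_id k).add_const l).div_const 2).mul_const (Real.log 2)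
    refine this.congr_deriv ?_
    ring
  have h5 := hasDerivAt_exp_neg_mul (Real.log 2) k
  have h6 : HasDerivAt (fun k' : ℝ =>
      ((n : ℝ) - k' - l) * (Real.exp (-k' * Real.log 2) + Real.exp (-l * Real.log 2)))
      ((-1) * (Real.exp (-k * Real.log 2) + Real.exp (-l * Real.log 2))
        + ((n : ℝ) - k - l) * (-Real.log 2 * Real.exp (-k * Real.log 2))) k := by
    have ha : HasDerivAt (fun k' : ℝ => (n : ℝ) - k' - l) (-1) k := by
      simpa using (((hasDerivAt_id k).const_sub (n : ℝ)).sub_const l)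
    exact ha.mul (h5.add_const _)
  have := ((((((h1.sub h2).sub_const (l * Real.log l)).add (hasDerivAt_id k)).add_const l).sub
      h3).sub h4).sub h6
  refine this.congr_deriv ?_
  simp only [gg, id_eq]; ring

noncomputable def psi (n : ℕ) (x : ℝ) : ℝ := gg n x x

def IsCritPt (n : ℕ) (k l : ℝ) : Prop :=
  deriv (fun k' => f n k' l) k = 0 ∧ deriv (fun l' => f n k l') l = 0

lemma deriv_f_fst (n : ℕ) (l : ℝ) {k : ℝ} (hk : 0 < k) :
    deriv (fun k' => f n k' l) k = gg n k l := (hasDerivAt_f n l hk).deriv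

lemma deriv_f_snd (n : ℕ) (k : ℝ) {l : ℝ} (hl : 0 < l) :
    deriv (fun l' => f n k l') l = gg n l k := by
  have : (fun l' => f n k l') = fun l' => f n l' k := funext fun l' => f_comm n k l'
  rw [this, deriv_f_fst n k hl]

lemma critpt_iff (n : ℕ) {k l : ℝ} (hk : 0 < k) (hl : 0 < l) :
    IsCritPt n k l ↔ gg n k l = 0 ∧ gg n l k = 0 := by
  unfold IsCritPt
  rw [deriv_f_fst n l hk, deriv_f_snd n k hl]

lemma gg_lt (n : ℕ) {k l : ℝ} (hl : 1 ≤ l) (hlk : l < k) (hle : k + l ≤ (n : ℝ) - 1) :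
    gg n k l < gg n l k := by
  have c2 : (0:ℝ) < Real.log 2 := Real.log_pos (by norm_num)
  have hlog : Real.log l < Real.log k := Real.log_lt_log (by linarith) hlk
  have hexp : Real.exp (-k * Real.log 2) < Real.exp (-l * Real.log 2) := by
    apply Real.exp_lt_exp.2; nlinarith
  have hn : (1:ℝ) ≤ (n : ℝ) - k - l := by linarith
  have := mul_lt_mul_of_pos_left hexp (by nlinarith : (0:ℝ) < ((n:ℝ) - k - l) * Real.log 2)
  unfold gg
  nlinarith

lemma psi_eq (n : ℕ) (x : ℝ) : psi n x =
    Real.log n - Real.log x - 2 * x * Real.log 2 - Real.log 2 / 2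
      + 2 * Real.exp (-x * Real.log 2)
      + ((n : ℝ) - 2 * x) * Real.log 2 * Real.exp (-x * Real.log 2) := by
  unfold psi gg; ring_nf

lemma psi_strictAntiOn (n : ℕ) :
    StrictAntiOn (psi n) (Set.Icc 1 (((n : ℝ) - 1) / 2)) := by
  intro a ha b hb hab
  have c2 : (0:ℝ) < Real.log 2 := Real.log_pos (by norm_num)
  have ha1 : (1:ℝ) ≤ a := ha.1
  have hb2 : b ≤ ((n : ℝ) - 1) / 2 := hb.2
  have hlog : Real.log a < Real.log b := Real.log_lt_log (by linarith) hab
  have hexp : Real.exp (-b * Real.log 2) < Real.exp (-a * Real.log 2) := by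
    apply Real.exp_lt_exp.2; nlinarith
  have hexpb : (0:ℝ) < Real.exp (-b * Real.log 2) := Real.exp_pos _
  have hnb : (1:ℝ) ≤ (n : ℝ) - 2 * b := by linarith
  have hprod : ((n : ℝ) - 2 * b) * Real.log 2 * Real.exp (-b * Real.log 2)
      < ((n : ℝ) - 2 * a) * Real.log 2 * Real.exp (-a * Real.log 2) := by
    have h1 : ((n : ℝ) - 2 * b) * Real.log 2 < ((n : ℝ) - 2 * a) * Real.log 2 := by nlinarith
    calc ((n : ℝ) - 2 * b) * Real.log 2 * Real.exp (-b * Real.log 2)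
        < ((n : ℝ) - 2 * a) * Real.log 2 * Real.exp (-b * Real.log 2) := by
          apply mul_lt_mul_of_pos_right h1 hexpb
      _ ≤ ((n : ℝ) - 2 * a) * Real.log 2 * Real.exp (-a * Real.log 2) := by
          apply mul_le_mul_of_nonneg_left hexp.le (by nlinarith)
  rw [psi_eq, psi_eq]
  nlinarith

lemma psi_continuousOn (n : ℕ) : ContinuousOn (psi n) (Set.Icc 1 (((n : ℝ) - 1) / 2)) := by
  have : ∀ x ∈ Set.Icc (1:ℝ) (((n : ℝ) - 1) / 2), psi n x =
      Real.log n - Real.log x - 2 * x * Real.log 2 - Real.log 2 / 2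
        + 2 * Real.exp (-x * Real.log 2)
        + ((n : ℝ) - 2 * x) * Real.log 2 * Real.exp (-x * Real.log 2) := fun x _ => psi_eq n x
  apply ContinuousOn.congr _ this
  have hlog : ContinuousOn Real.log (Set.Icc (1:ℝ) (((n : ℝ) - 1) / 2)) := by
    apply Real.continuousOn_log.mono
    intro x hx
    simp only [Set.mem_compl_iff, Set.mem_singleton_iff]
    have : (1:ℝ) ≤ x := hx.1
    intro h; rw [h] at this; norm_num at this
  fun_prop (disch := skip)

lemma exp_neg_log_two : Real.exp (-1 * Real.log 2) = 1 / 2 := by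
  rw [neg_one_mul, Real.exp_neg, Real.exp_log] <;> norm_num

lemma psi_one_pos {n : ℕ} (hn : 7 ≤ n) : 0 < psi n 1 := by
  have c2 : (0:ℝ) < Real.log 2 := Real.log_pos (by norm_num)
  have hn7 : (7:ℝ) ≤ (n:ℝ) := by exact_mod_cast hn
  have hln : (0:ℝ) < Real.log n := Real.log_pos (by linarith)
  rw [psi_eq, exp_neg_log_two, Real.log_one]
  nlinarith

lemma psi_exists_zero {n : ℕ} (hn : 2^500 ≤ n) :
    ∃ x ∈ Set.Icc (1:ℝ) (((n : ℝ) - 1) / 2), psi n x = 0 := by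
  have hnR : (2:ℝ)^500 ≤ (n:ℝ) := by exact_mod_cast hn
  have hbig : (10^6 : ℝ) ≤ (n:ℝ) := le_trans (by norm_num : (10^6:ℝ) ≤ 2^20) (le_trans (pow_le_pow_right₀ (by norm_num : (1:ℝ) ≤ 2) (by norm_num : 20 ≤ 500)) hnR)
  clear hnR
  have c2 : (0:ℝ) < Real.log 2 := Real.log_pos (by norm_num)
  have c2' : Real.log 2 > 0.6931471803 := Real.log_two_gt_d9
  have hM1 : (1:ℝ) ≤ ((n:ℝ) - 1) / 2 := by linarith
  -- log n ≤ n / 1000 for n ≥ 10^6 :  log n ≤ n - 1 is too weak; use log n = 2 log sqrt n ≤ 2 sqrt n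
  have hsq : Real.sqrt (n:ℝ) ^ 2 = (n:ℝ) := Real.sq_sqrt (by positivity)
  have hsqrt_big : (1000:ℝ) ≤ Real.sqrt (n:ℝ) := by
    rw [show (1000:ℝ) = Real.sqrt (1000^2) by rw [Real.sqrt_sq] ; norm_num]
    exact Real.sqrt_le_sqrt (by nlinarith)
  have hlogn : Real.log n ≤ 2 * Real.sqrt (n:ℝ) := by
    have h1 : Real.log (n:ℝ) = 2 * Real.log (Real.sqrt (n:ℝ)) := by
      rw [Real.log_sqrt (by positivity)]; ring
    have h2 : Real.log (Real.sqrt (n:ℝ)) ≤ Real.sqrt (n:ℝ) - 1 :=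
      Real.log_le_sub_one_of_pos (by positivity)
    linarith
  have hpsiM : psi n (((n : ℝ) - 1) / 2) < 0 := by
    rw [psi_eq]
    have hE : Real.exp (-(((n : ℝ) - 1) / 2) * Real.log 2) ≤ 1 := by
      rw [Real.exp_le_one_iff]; nlinarith
    have hE0 : 0 < Real.exp (-(((n : ℝ) - 1) / 2) * Real.log 2) := Real.exp_pos _
    have hlogM : 0 ≤ Real.log (((n : ℝ) - 1) / 2) := Real.log_nonneg hM1
    have hc2' : Real.log 2 ≤ 1 := by
      nlinarith [Real.log_le_sub_one_of_pos (by norm_num : (0:ℝ) < 2)]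
    nlinarith
  have hpsi1 : 0 < psi n 1 := psi_one_pos (le_trans (by norm_num : 7 ≤ 2^3) (le_trans (Nat.pow_le_pow_right (by norm_num) (by norm_num)) hn))
  have := intermediate_value_Icc' hM1 (psi_continuousOn n)
  have h0 : (0:ℝ) ∈ Set.Icc (psi n (((n : ℝ) - 1) / 2)) (psi n 1) := ⟨hpsiM.le, hpsi1.le⟩
  obtain ⟨x, hx, hx0⟩ := this h0
  exact ⟨x, hx, hx0⟩

open Classical in
noncomputable def kstar (n : ℕ) : ℝ :=
  if h : ∃ x ∈ Set.Icc (1:ℝ) (((n : ℝ) - 1) / 2), psi n x = 0 then h.choose else 1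

lemma kstar_spec {n : ℕ} (hn : 2^500 ≤ n) :
    kstar n ∈ Set.Icc (1:ℝ) (((n : ℝ) - 1) / 2) ∧ psi n (kstar n) = 0 := by
  have h := psi_exists_zero hn
  rw [kstar]
  rw [dif_pos h]
  exact ⟨h.choose_spec.1, h.choose_spec.2⟩

lemma exp_neg_le_quad {x : ℝ} (hx : 0 ≤ x) : Real.exp (-x) ≤ 1 - x + x^2 := by
  have h1 : 1 + x ≤ Real.exp x := by have := Real.add_one_le_exp x; linarith
  have h3 : Real.exp (-x) * Real.exp x = 1 := by rw [← Real.exp_add]; simp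
  have h4 : 0 < Real.exp (-x) := Real.exp_pos _
  have h5 : Real.exp (-x) * (1 + x) ≤ 1 := by nlinarith
  nlinarith [pow_nonneg hx 3, sq_nonneg x]

lemma aux1 {SL L LL : ℝ} (h58 : 58 ≤ SL) (hm : SL*SL = L) (hLL : LL ≤ 2*SL) :
    5*LL ≤ 1*L := by
  have h1 : (0:ℝ) ≤ (SL-58)*SL := mul_nonneg (by linarith) (by linarith)
  nlinarith

lemma aux2 {SL L LL : ℝ} (h58 : 58 ≤ SL) (hm : SL*SL = L) (hLL : LL ≤ 2*SL)
    (h0 : 0 ≤ LL) : 25*LL*LL ≤ 0.87*LL*L := by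
  have hSL0 : (0:ℝ) ≤ SL := by linarith
  have h1 : (0:ℝ) ≤ (SL-58)*(SL*LL) := mul_nonneg (by linarith) (mul_nonneg hSL0 h0)
  have h2 : (0:ℝ) ≤ (2*SL - LL)*LL := mul_nonneg (by linarith) h0
  have h3 : (0:ℝ) ≤ SL*LL := mul_nonneg hSL0 h0
  nlinarith

lemma aux3 {c LL : ℝ} (h : 0.6931 < c) (h0 : 0 ≤ LL) : 3.46*LL ≤ 5*c*LL := by
  nlinarith [mul_nonneg (by linarith : (0:ℝ) ≤ c - 0.6931) h0]

lemma aux5 {c : ℝ} (h1 : 0 < c) (h2 : c < 0.6932) : c*c ≤ 1 := by nlinarith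


set_option maxHeartbeats 1000000 in
lemma key {n : ℕ} (hn : 2^5000 ≤ n) :
    1 ≤ (Real.log n - Real.log (Real.log n) + Real.log (Real.log 2)) / Real.log 2 ∧
    (Real.log n - Real.log (Real.log n) + Real.log (Real.log 2)) / Real.log 2
        + 5 * Real.log (Real.log n) / Real.log n ≤ ((n:ℝ)-1)/2 ∧
    0 < psi n ((Real.log n - Real.log (Real.log n) + Real.log (Real.log 2)) / Real.log 2) ∧
    psi n ((Real.log n - Real.log (Real.log n) + Real.log (Real.log 2)) / Real.log 2
        + 5 * Real.log (Real.log n) / Real.log n) < 0 := by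
  have hnR : (2:ℝ)^5000 ≤ (n:ℝ) := by exact_mod_cast hn
  have hn0 : (0:ℝ) < n := lt_of_lt_of_le (by positivity) hnR
  have h10 : (10:ℝ) ≤ (n:ℝ) := le_trans (by norm_num : (10:ℝ) ≤ 2^4) (le_trans (pow_le_pow_right₀ (by norm_num) (by norm_num)) hnR)
  set c := Real.log 2 with hc_def
  set L := Real.log n with hL_def
  set LL := Real.log L with hLL_def
  set d := Real.log c with hd_def
  have hc1 : (0.6931:ℝ) < c := lt_trans (by norm_num) Real.log_two_gt_d9
  have hc2 : c < 0.6932 := lt_trans Real.log_two_lt_d9 (by norm_num)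
  have hc0 : (0:ℝ) < c := by linarith
  have hL3465 : (3465:ℝ) ≤ L := by
    have h1 : Real.log ((2:ℝ)^5000) ≤ L := Real.log_le_log (by positivity) hnR
    rw [Real.log_pow] at h1
    push_cast at h1
    rw [← hc_def] at h1
    linarith
  have hL0 : (0:ℝ) < L := by linarith
  have hLL8 : (8:ℝ) ≤ LL := by
    have he : Real.exp 8 ≤ L := by
      have h82 : Real.exp 8 = Real.exp 1 ^ (8:ℕ) := by
        rw [← Real.exp_nat_mul]; norm_num
      have h9 : Real.exp 1 ^ (8:ℕ) ≤ 2.7182818286^(8:ℕ) :=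
        pow_le_pow_left₀ (Real.exp_pos 1).le Real.exp_one_lt_d9.le 8
      have h9' : (2.7182818286:ℝ)^(8:ℕ) ≤ 2999 := by norm_num
      linarith
    calc (8:ℝ) = Real.log (Real.exp 8) := (Real.log_exp 8).symm
    _ ≤ LL := Real.log_le_log (Real.exp_pos 8) he
  have hLL0 : (0:ℝ) < LL := by linarith
  have hsn : (160000:ℝ) ≤ Real.sqrt (n:ℝ) := by
    have h1 : ((160000:ℝ))^2 ≤ (n:ℝ) := by
      have : ((160000:ℝ))^2 ≤ (2:ℝ)^5000 := le_trans (by norm_num : (160000:ℝ)^2 ≤ 2^40) (pow_le_pow_right₀ (by norm_num) (by norm_num))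
      exact le_trans this hnR
    have h2 : (160000:ℝ) = Real.sqrt (160000^2) :=
      (Real.sqrt_sq (by norm_num : (0:ℝ) ≤ 160000)).symm
    rw [h2]; exact Real.sqrt_le_sqrt h1
  have hsn2 : Real.sqrt (n:ℝ) * Real.sqrt (n:ℝ) = (n:ℝ) := Real.mul_self_sqrt hn0.le
  clear hn hnR
  have hsL : (58:ℝ) ≤ Real.sqrt L := by
    have h58 : (58:ℝ) = Real.sqrt 3364 := by
      rw [show (3364:ℝ) = 58^2 by norm_num, Real.sqrt_sq (by norm_num : (0:ℝ) ≤ 58)]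
    rw [h58]; exact Real.sqrt_le_sqrt (by linarith)
  have hsL2 : Real.sqrt L * Real.sqrt L = L := Real.mul_self_sqrt hL0.le
  have hLLsL : LL ≤ 2 * Real.sqrt L := by
    have h1 : LL = 2 * Real.log (Real.sqrt L) := by
      rw [hLL_def, Real.log_sqrt hL0.le]; ring
    have h2 : Real.log (Real.sqrt L) ≤ Real.sqrt L - 1 :=
      Real.log_le_sub_one_of_pos (by positivity)
    linarith
  have hdu : d ≤ -0.30 := by
    have := Real.log_le_sub_one_of_pos hc0
    rw [← hd_def] at this
    linarith
  have hdl : (-0.45:ℝ) ≤ d := by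
    have h1 : Real.log c⁻¹ ≤ c⁻¹ - 1 := Real.log_le_sub_one_of_pos (by positivity)
    rw [Real.log_inv, ← hd_def] at h1
    have h2 : c⁻¹ ≤ (0.6931:ℝ)⁻¹ := inv_anti₀ (by norm_num) hc1.le
    have h3 : ((0.6931:ℝ))⁻¹ ≤ 1.4428 := by norm_num
    linarith
  -- L^2 small compared to n
  have hLq : L ≤ 4 * Real.sqrt (Real.sqrt (n:ℝ)) := by
    have hq0 : (0:ℝ) < Real.sqrt (Real.sqrt (n:ℝ)) := by
      apply Real.sqrt_pos.2; apply Real.sqrt_pos.2; exact hn0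
    have e1 : Real.log (Real.sqrt (n:ℝ)) = L / 2 := by
      rw [Real.log_sqrt hn0.le]
    have e2 : Real.log (Real.sqrt (Real.sqrt (n:ℝ))) = L / 4 := by
      rw [Real.log_sqrt (Real.sqrt_nonneg _), e1]; ring
    have e3 : Real.log (Real.sqrt (Real.sqrt (n:ℝ))) ≤ Real.sqrt (Real.sqrt (n:ℝ)) - 1 :=
      Real.log_le_sub_one_of_pos hq0
    rw [e2] at e3; linarith
  have hq2 : Real.sqrt (Real.sqrt (n:ℝ)) * Real.sqrt (Real.sqrt (n:ℝ)) = Real.sqrt (n:ℝ) :=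
    Real.mul_self_sqrt (Real.sqrt_nonneg _)
  have hLn : L^2 ≤ 0.0001 * (n:ℝ) := by nlinarith [Real.sqrt_nonneg (Real.sqrt (n:ℝ)), Real.sqrt_nonneg (n:ℝ)]
  have hLn1 : L ≤ 0.0001 * (n:ℝ) := by nlinarith
  clear_value c L LL d
  -- facts about t
  set t := (L - LL + d) / c with ht_def
  clear_value t
  have htc : t * c = L - LL + d := by
    rw [ht_def]; exact div_mul_cancel₀ _ hc0.ne'
  have htlow : L / 2 ≤ t := by
    rw [ht_def, le_div_iff₀ hc0]; nlinarith
  have ht0 : (0:ℝ) < t := by linarith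
  have htup : t ≤ L / c := by
    rw [ht_def, div_le_div_iff₀ hc0 hc0]; nlinarith
  have htup' : t ≤ 1.5 * L := by
    have h1 : L / c ≤ 1.5 * L := by
      rw [div_le_iff₀ hc0]; nlinarith [hL0.le, hc1]
    linarith
  have hlogt_up : Real.log t ≤ LL - d := by
    calc Real.log t ≤ Real.log (L / c) := Real.log_le_log ht0 htup
    _ = LL - d := by rw [Real.log_div hL0.ne' hc0.ne', ← hLL_def, ← hd_def]
  have hlogt_lo : LL - c ≤ Real.log t := by
    have h1 : Real.log (L / 2) ≤ Real.log t := Real.log_le_log (by positivity) htlow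
    rw [Real.log_div hL0.ne' (by norm_num : (2:ℝ) ≠ 0), ← hLL_def, ← hc_def] at h1
    exact h1
  have hE : Real.exp (-t * c) = L * ((n:ℝ)⁻¹ * c⁻¹) := by
    have h1 : -t * c = LL + (-L + -d) := by rw [neg_mul, htc]; ring
    rw [h1, Real.exp_add, Real.exp_add, hLL_def, Real.exp_log hL0,
      Real.exp_neg, Real.exp_neg, hL_def, Real.exp_log hn0, hd_def, Real.exp_log hc0]
  have hEpos : (0:ℝ) < Real.exp (-t * c) := Real.exp_pos _
  have hE_small : Real.exp (-t * c) ≤ 0.001 := by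
    rw [hE, show L * ((n:ℝ)⁻¹ * c⁻¹) = L / ((n:ℝ) * c) by rw [div_eq_mul_inv, mul_inv],
      div_le_iff₀ (by positivity)]
    nlinarith
  -- Target A
  have hprod : ((n:ℝ) - 2*t) * c * Real.exp (-t * c) = L - 2*t*L/(n:ℝ) := by
    rw [hE]; field_simp
  have hterm : 2*t*L/(n:ℝ) ≤ 0.001 := by
    rw [div_le_iff₀ hn0]; nlinarith [htup', hLn, hL0.le, ht0.le]
  have hpsit : psi n t = L - Real.log t - 2*t*c - c/2 + 2*Real.exp (-t*c)
      + ((n:ℝ)-2*t)*c*Real.exp (-t*c) := by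
    rw [psi_eq, ← hc_def, ← hL_def]
  have h2tc : 2*t*c = 2*L - 2*LL + 2*d := by linear_combination 2*htc
  have hA : 0 < psi n t := by
    rw [hpsit, hprod, h2tc]
    linarith [hlogt_up, hEpos.le, hterm, hLL8, hdu, hc2]
  -- Target B
  have hε0 : (0:ℝ) ≤ 5*LL/L := by positivity
  set ε := 5*LL/L with hε_def
  clear_value ε
  have hεL : ε * L = 5*LL := by rw [hε_def]; field_simp
  have hε1 : ε ≤ 1 := by
    rw [hε_def, div_le_iff₀ hL0]
    linarith [aux1 hsL hsL2 hLLsL]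
  have hεc0 : (0:ℝ) ≤ ε*c := mul_nonneg hε0 hc0.le
  have hEs : Real.exp (-(t+ε)*c) = Real.exp (-t*c) * Real.exp (-(ε*c)) := by
    rw [← Real.exp_add]; ring_nf
  have hquad : Real.exp (-(ε*c)) ≤ 1 - ε*c + (ε*c)^2 := exp_neg_le_quad hεc0
  have hF1 : Real.exp (-(ε*c)) ≤ 1 := by
    have h := Real.exp_le_exp.2 (by linarith : -(ε*c) ≤ 0)
    simpa using h
  have hncE : (n:ℝ)*c*Real.exp (-t*c) = L := by rw [hE]; field_simp
  have hbig : ((n:ℝ)-2*(t+ε))*c*Real.exp (-(t+ε)*c) ≤ L - 5*c*LL + (ε*c)^2*L := by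
    have hEp : (0:ℝ) < Real.exp (-(t+ε)*c) := Real.exp_pos _
    have h0 : (0:ℝ) ≤ 2*(t+ε)*c*Real.exp (-(t+ε)*c) := by positivity
    have h1 : ((n:ℝ)-2*(t+ε))*c*Real.exp (-(t+ε)*c) ≤ (n:ℝ)*c*Real.exp (-(t+ε)*c) := by
      linarith [h0]
    have h2 : (n:ℝ)*c*Real.exp (-(t+ε)*c) = L * Real.exp (-(ε*c)) := by
      rw [hEs, show (n:ℝ)*c*(Real.exp (-t*c)*Real.exp (-(ε*c)))
        = ((n:ℝ)*c*Real.exp (-t*c))*Real.exp (-(ε*c)) from by ring, hncE]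
    have h3 : L * Real.exp (-(ε*c)) ≤ L * (1 - ε*c + (ε*c)^2) :=
      mul_le_mul_of_nonneg_left hquad hL0.le
    have h4 : L * (1 - ε*c + (ε*c)^2) = L - 5*c*LL + (ε*c)^2*L := by
      linear_combination (-c)*hεL
    linarith
  have hqsmall : (ε*c)^2*L ≤ 0.87*LL := by
    have h5 : ε*ε*L ≤ 0.87*LL := by
      have e1 : ε*ε*L = 25*LL*LL/L := by rw [hε_def]; field_simp; ring
      rw [e1, div_le_iff₀ hL0]
      linarith [aux2 hsL hsL2 hLLsL hLL0.le]
    have h6 : (ε*c)^2*L = c*c*(ε*ε*L) := by ring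
    have h7 : c*c ≤ 1 := aux5 hc0 hc2
    have h8 : (0:ℝ) ≤ ε*ε*L := by positivity
    calc (ε*c)^2*L = c*c*(ε*ε*L) := h6
    _ ≤ 1*(ε*ε*L) := mul_le_mul_of_nonneg_right h7 h8
    _ = ε*ε*L := by ring
    _ ≤ 0.87*LL := h5
  have hE2 : 2*Real.exp (-(t+ε)*c) ≤ 0.002 := by
    rw [hEs]
    have h9 : Real.exp (-t*c) * Real.exp (-(ε*c)) ≤ 0.001*1 :=
      mul_le_mul hE_small hF1 (Real.exp_pos _).le (by norm_num)
    linarith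
  have h2sc : 2*(t+ε)*c = 2*L - 2*LL + 2*d + 2*(ε*c) := by linear_combination 2*htc
  have hlogs : LL - c ≤ Real.log (t+ε) :=
    le_trans hlogt_lo (Real.log_le_log ht0 (by linarith))
  have hcLL : 3.46*LL ≤ 5*c*LL := aux3 hc1 hLL0.le
  have hpsis : psi n (t+ε) = L - Real.log (t+ε) - 2*(t+ε)*c - c/2
      + 2*Real.exp (-(t+ε)*c) + ((n:ℝ)-2*(t+ε))*c*Real.exp (-(t+ε)*c) := by
    rw [psi_eq, ← hc_def, ← hL_def]
  have hB : psi n (t+ε) < 0 := by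
    rw [hpsis, h2sc]
    linarith [hbig, hqsmall, hE2, hlogs, hcLL, hLL8, hdl, hc2, hεc0]
  have hC1 : (1:ℝ) ≤ t := by linarith
  have hC2 : t + ε ≤ ((n:ℝ)-1)/2 := by
    rw [le_div_iff₀ (by norm_num : (0:ℝ) < 2)]
    linarith [htup', hε1, hLn1, h10]
  exact ⟨hC1, hC2, hA, hB⟩

def region (n : ℕ) : Set (ℝ × ℝ) :=
  {p : ℝ × ℝ | 1 ≤ p.1 ∧ 1 ≤ p.2 ∧ p.1 + p.2 ≤ (n : ℝ) - 1}

/-- For all sufficiently large `n`, the gradient of `f` has a unique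
zero in the region `R`; it has the symmetric form `(k*(n), k*(n))`, and
`k*(n) = (ln n − ln ln n + ln ln 2)/ln 2 + O(ln ln n / ln n)`. -/
theorem unique_critical_point :
    ∃ (kstar : ℕ → ℝ) (C : ℝ) (N : ℕ), ∀ n : ℕ, N ≤ n →
      ((kstar n, kstar n) ∈ region n ∧ IsCritPt n (kstar n) (kstar n) ∧
        ∀ k l : ℝ, (k, l) ∈ region n → IsCritPt n k l → k = kstar n ∧ l = kstar n) ∧
      |kstar n - (Real.log n - Real.log (Real.log n) + Real.log (Real.log 2)) / Real.log 2|
        ≤ C * Real.log (Real.log n) / Real.log n := by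
  refine ⟨kstar, 5, 2^5000, ?_⟩
  intro n hn
  have hn500 : 2^500 ≤ n :=
    le_trans (Nat.pow_le_pow_right (by norm_num) (by norm_num)) hn
  obtain ⟨hks_mem, hks_zero⟩ := kstar_spec hn500
  obtain ⟨ht1, htεM, hψt, hψtε⟩ := key hn
  set t := (Real.log n - Real.log (Real.log n) + Real.log (Real.log 2)) / Real.log 2 with ht_def
  set ε := 5 * Real.log (Real.log n) / Real.log n with hε_def
  have hks1 : 1 ≤ kstar n := hks_mem.1
  have hksM : kstar n ≤ ((n:ℝ)-1)/2 := hks_mem.2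
  have hks0 : (0:ℝ) < kstar n := by linarith
  have hnR : (2:ℝ)^5000 ≤ (n:ℝ) := by exact_mod_cast hn
  have hn3 : (3:ℝ) ≤ (n:ℝ) := le_trans (by norm_num : (3:ℝ) ≤ 2^2) (le_trans (pow_le_pow_right₀ (by norm_num) (by norm_num)) hnR)
  have hL1 : 1 < Real.log n := by
    have he : Real.exp 1 < 3 := lt_trans Real.exp_one_lt_d9 (by norm_num)
    calc (1:ℝ) = Real.log (Real.exp 1) := (Real.log_exp 1).symm
    _ < Real.log 3 := Real.log_lt_log (Real.exp_pos 1) he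
    _ ≤ Real.log n := Real.log_le_log (by norm_num) hn3
  have hLL0 : 0 < Real.log (Real.log n) := Real.log_pos hL1
  have hε0 : (0:ℝ) ≤ ε := by rw [hε_def]; positivity
  constructor
  · refine ⟨⟨hks1, hks1, by linarith⟩, ?_, ?_⟩
    · exact (critpt_iff n hks0 hks0).2 ⟨hks_zero, hks_zero⟩
    · intro k l hmem hcr
      obtain ⟨hk1, hl1, hsum⟩ := hmem
      simp only at hk1 hl1 hsum
      have hk0 : (0:ℝ) < k := by linarith
      have hl0 : (0:ℝ) < l := by linarith
      obtain ⟨e1, e2⟩ := (critpt_iff n hk0 hl0).1 hcr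
      have hkl : k = l := by
        rcases lt_trichotomy k l with h | h | h
        · exfalso
          have := gg_lt n hk1 h (by linarith)
          rw [e1, e2] at this; exact lt_irrefl 0 this
        · exact h
        · exfalso
          have := gg_lt n hl1 h (by linarith)
          rw [e1, e2] at this; exact lt_irrefl 0 this
      subst hkl
      have hkIcc : k ∈ Set.Icc (1:ℝ) (((n:ℝ)-1)/2) := ⟨hk1, by linarith⟩
      have hpk : psi n k = 0 := e1
      have hk_eq : k = kstar n :=
        (psi_strictAntiOn n).injOn hkIcc hks_mem (by rw [hpk, hks_zero])
      exact ⟨hk_eq, hk_eq⟩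
  · have htM : t ∈ Set.Icc (1:ℝ) (((n:ℝ)-1)/2) := ⟨ht1, by linarith⟩
    have h1 : t < kstar n := by
      by_contra h
      push_neg at h
      rcases eq_or_lt_of_le h with he | hlt
      · rw [← he] at hψt; rw [hks_zero] at hψt; exact lt_irrefl 0 hψt
      · have := psi_strictAntiOn n hks_mem htM hlt
        rw [hks_zero] at this; linarith
    have h2 : kstar n ≤ t + ε := by
      by_contra h
      push_neg at h
      have htε_mem : t + ε ∈ Set.Icc (1:ℝ) (((n:ℝ)-1)/2) := ⟨by linarith, htεM⟩
      have := psi_strictAntiOn n htε_mem hks_mem h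
      rw [hks_zero] at this; linarith
    rw [abs_of_nonneg (by linarith)]
    linarith
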